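/- If Γ is a bounded monoid, then ι(E) generates Ê as an R-module; that is, the R-submodule of Ê generated by the image of the splitting ι : E → Ê equals Ê. -/

import Mathlib

noncomputable section

/-- `α ≺ β` iff `α + γ = β` for some `γ ≠ 0` in the abelian monoid `Γ`. -/
def Prec {Γ : Type*} [AddCommMonoid Γ] (α β : Γ) : Prop :=
  ∃ γ : Γ, γ ≠ 0 ∧ α + γ = β

/-- `Γ` is bounded: there is `ℓ : Γ → ℕ` bounding the length of every `≺`-chain below any
element. -/
def BoundedMonoid (Γ : Type*) [AddCommMonoid Γ] : Prop :=
  ∃ ℓ : Γ → ℕ, ∀ (s : ℕ) (c : ℕ → Γ), (∀ i < s, Prec (c (i + 1)) (c i)) → s ≤ ℓ (c 0)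

/-- if `Γ` is a bounded monoid then `ι(E)` generates `Ê` as an `R`-module.

Setting: `R₀ = ℤ[ν,ν⁻¹]`, `R` a `Γ`-graded unital ring with central degree-zero part `R₀`
(grading `𝒜`), `Ê = M` a `Γ`-graded left `R`-module (grading `ℰ`) with each graded piece
free over `R₀`, `E = Ê/(R₊·Ê)` free over `R₀` (presented via the projection `π` whose kernel
is `R₊·Ê`), and `ι` a homogeneous `R₀`-linear splitting of `π`. -/
theorem statement2
    {Γ : Type*} [AddCommMonoid Γ] [DecidableEq Γ]
    {R : Type*} [Ring R] [Algebra (LaurentPolynomial ℤ) R]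
    (𝒜 : Γ → Submodule (LaurentPolynomial ℤ) R)
    (hRinternal : DirectSum.IsInternal 𝒜)
    (hRzero : 𝒜 0 = LinearMap.range (Algebra.linearMap (LaurentPolynomial ℤ) R))
    (hRmul : ∀ (γ γ' : Γ) (x y : R), x ∈ 𝒜 γ → y ∈ 𝒜 γ' → x * y ∈ 𝒜 (γ + γ'))
    {M : Type*} [AddCommGroup M] [Module (LaurentPolynomial ℤ) M] [Module R M]
    [IsScalarTower (LaurentPolynomial ℤ) R M]
    (ℰ : Γ → Submodule (LaurentPolynomial ℤ) M)
    (hMinternal : DirectSum.IsInternal ℰ)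
    (hMfree : ∀ γ : Γ, Module.Free (LaurentPolynomial ℤ) (ℰ γ))
    (hMsmul : ∀ (γ γ' : Γ) (r : R) (m : M), r ∈ 𝒜 γ → m ∈ ℰ γ' → r • m ∈ ℰ (γ + γ'))
    {E : Type*} [AddCommGroup E] [Module (LaurentPolynomial ℤ) E]
    [Module.Free (LaurentPolynomial ℤ) E]
    (π : M →ₗ[LaurentPolynomial ℤ] E) (hπsurj : Function.Surjective π)
    (hπker : LinearMap.ker π = Submodule.span (LaurentPolynomial ℤ)
      {z : M | ∃ γ : Γ, γ ≠ 0 ∧ ∃ r ∈ 𝒜 γ, ∃ m : M, z = r • m})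
    (ι : E →ₗ[LaurentPolynomial ℤ] M) (hιπ : ∀ x : E, π (ι x) = x)
    (hιhom : ∀ (γ : Γ) (x : E), x ∈ (ℰ γ).map π → ι x ∈ ℰ γ)
    (hbounded : BoundedMonoid Γ) :
    Submodule.span R (Set.range ι) = ⊤ := by
  classical
  obtain ⟨ℓ, hℓ⟩ := hbounded
  -- accessibility of Prec from boundedness
  have acc_of_bound : ∀ (n : ℕ) (γ : Γ),
      (∀ (s : ℕ) (c : ℕ → Γ), c 0 = γ → (∀ i < s, Prec (c (i + 1)) (c i)) → s ≤ n) →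
      Acc Prec γ := by
    intro n
    induction n with
    | zero =>
      intro γ h
      constructor
      intro δ hδ
      exfalso
      have h1 := h 1 (fun i => if i = 0 then γ else δ) (by simp) ?_
      · omega
      · intro i hi
        interval_cases i
        simpa using hδ
    | succ n ih =>
      intro γ h
      constructor
      intro δ hδ
      apply ih
      intro s c hc0 hchain
      have h1 := h (s + 1) (fun i => if i = 0 then γ else c (i - 1)) (by simp) ?_
      · omega
      · intro i hi
        rcases Nat.eq_zero_or_pos i with hi0 | hipos
        · subst hi0
          simpa [hc0] using hδ
        · have h1 : i + 1 ≠ 0 := by omega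
          have h2 : i ≠ 0 := by omega
          simp only [h1, h2, if_neg, Nat.add_sub_cancel]
          have := hchain (i - 1) (by omega)
          have hieq : i - 1 + 1 = i := by omega
          rwa [hieq] at this
  have hacc : ∀ γ : Γ, Acc Prec γ := fun γ =>
    acc_of_bound (ℓ γ) γ (fun s c hc0 hchain => by
      have := hℓ s c hchain
      rwa [hc0] at this)
  set R₀ := LaurentPolynomial ℤ
  set S := Submodule.span R (Set.range ι) with hS
  -- the projection onto the γ-component
  set e : DirectSum Γ (fun γ => ↥(ℰ γ)) ≃ₗ[R₀] M :=
    LinearEquiv.ofBijective (DirectSum.coeLinearMap ℰ) hMinternal with he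
  set p : Γ → (M →ₗ[R₀] M) := fun γ =>
    (ℰ γ).subtype ∘ₗ (DirectSum.component R₀ Γ _ γ) ∘ₗ e.symm.toLinearMap with hp
  have hp_same : ∀ (γ : Γ) (m : M), m ∈ ℰ γ → p γ m = m := by
    intro γ m hm
    simp only [hp, LinearMap.comp_apply, LinearEquiv.coe_coe]
    have := hMinternal.ofBijective_coeLinearMap_of_mem hm
    rw [show (DirectSum.component R₀ Γ _ γ) (e.symm m) = e.symm m γ from rfl, he, this]
    rfl
  have hp_ne : ∀ (γ δ : Γ) (m : M), m ∈ ℰ δ → δ ≠ γ → p γ m = 0 := by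
    intro γ δ m hm hne
    simp only [hp, LinearMap.comp_apply, LinearEquiv.coe_coe]
    have := hMinternal.ofBijective_coeLinearMap_of_mem_ne hne hm
    rw [show (DirectSum.component R₀ Γ _ γ) (e.symm m) = e.symm m γ from rfl, he, this]
    simp
  -- the key inductive claim
  have key : ∀ γ : Γ, ∀ m ∈ ℰ γ, m ∈ S := by
    intro γ
    induction hacc γ with
    | intro γ _ ih =>
      intro m hm
      have hιm : ι (π m) ∈ ℰ γ := hιhom γ (π m) ⟨m, hm, rfl⟩
      have hιmS : ι (π m) ∈ S := Submodule.subset_span ⟨π m, rfl⟩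
      have hz : m - ι (π m) ∈ LinearMap.ker π := by
        simp [LinearMap.mem_ker, hιπ]
      have hzγ : m - ι (π m) ∈ ℰ γ := sub_mem hm hιm
      rw [hπker] at hz
      -- show the γ-component of anything in the kernel span is in S
      have hgen : {z : M | ∃ γ' : Γ, γ' ≠ 0 ∧ ∃ r ∈ 𝒜 γ', ∃ m' : M, z = r • m'} ⊆
          ((S.restrictScalars R₀).comap (p γ) : Set M) := by
        rintro z ⟨γ', hγ'0, r, hr, m', rfl⟩
        have hm' : m' ∈ ⨆ δ, ℰ δ := by
          rw [hMinternal.submodule_iSup_eq_top]; trivial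
        simp only [SetLike.mem_coe, Submodule.mem_comap, Submodule.restrictScalars_mem]
        refine Submodule.iSup_induction (motive := fun x => p γ (r • x) ∈ S) _ hm' ?_ ?_ ?_
        · intro δ x hx
          have hrx : r • x ∈ ℰ (γ' + δ) := hMsmul γ' δ r x hr hx
          by_cases hcase : γ' + δ = γ
          · rw [hp_same γ (r • x) (hcase ▸ hrx)]
            have hxS : x ∈ S := ih δ ⟨γ', hγ'0, by rw [add_comm]; exact hcase⟩ x hx
            exact Submodule.smul_mem S r hxS
          · rw [hp_ne γ (γ' + δ) (r • x) hrx hcase]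
            exact Submodule.zero_mem S
        · simp only [smul_zero, map_zero]
          exact Submodule.zero_mem S
        · intro x y hx hy
          rw [smul_add, map_add]
          exact Submodule.add_mem S hx hy
      have hspan := Submodule.span_le.mpr hgen
      have hz' := hspan hz
      simp only [Submodule.mem_comap, Submodule.restrictScalars_mem] at hz'
      rw [hp_same γ _ hzγ] at hz'
      have : m = (m - ι (π m)) + ι (π m) := by abel
      rw [this]
      exact Submodule.add_mem S hz' hιmS
  -- conclude
  rw [eq_top_iff]
  intro m _
  have hm : m ∈ ⨆ δ, ℰ δ := by rw [hMinternal.submodule_iSup_eq_top]; trivial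
  refine Submodule.iSup_induction (motive := fun x => x ∈ S) _ hm ?_ ?_ ?_
  · intro δ x hx; exact key δ x hx
  · exact Submodule.zero_mem S
  · intro x y hx hy; exact Submodule.add_mem S hx hy
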